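/- Let A ∈ ℂ^{N×N} be Hermitian positive definite, c ∈ ℂ^N, and let a, b be real numbers with a > b ≥ 0 and a + b = 1. Then the infimum over x̃ ∈ S of x̃^H A x̃ + 2 Re(x̃^H c) is less than or equal to the infimum over x̃ ∈ S of x̃^H A x̃ + √(b/a) · 2 Re(x̃^H c). (Proposition 3.) -/

import Mathlib

open Matrix
open scoped ComplexOrder

private lemma dft_orthog (N : ℕ) (hN : 0 < N) (ω : ℂ)
    (hω : ω = Complex.exp (2 * (Real.pi : ℂ) * Complex.I / N)) (k l : Fin N) :
    ∑ n : Fin N, ω ^ ((k : ℕ) * (n : ℕ)) *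
      (starRingEnd ℂ) (ω ^ ((l : ℕ) * (n : ℕ))) = if k = l then (N : ℂ) else 0 := by
  have hprim : IsPrimitiveRoot ω N := hω ▸ Complex.isPrimitiveRoot_exp N hN.ne'
  have hωN : ω ^ N = 1 := hprim.pow_eq_one
  have hnorm : ‖ω‖ = 1 := Complex.norm_eq_one_of_pow_eq_one hωN hN.ne'
  have hconj : (starRingEnd ℂ) ω = ω⁻¹ := (Complex.inv_eq_conj hnorm).symm
  have hω0 : ω ≠ 0 := hprim.ne_zero hN.ne'
  set z : ℂ := ω ^ (k : ℕ) * (ω ^ (l : ℕ))⁻¹ with hz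
  have hterm : ∀ n : Fin N,
      ω ^ ((k : ℕ) * (n : ℕ)) * (starRingEnd ℂ) (ω ^ ((l : ℕ) * (n : ℕ))) = z ^ (n : ℕ) := by
    intro n
    rw [map_pow, hconj, pow_mul, pow_mul, hz, mul_pow, inv_pow]
  rw [Finset.sum_congr rfl (fun n _ => hterm n), Fin.sum_univ_eq_sum_range (fun i => z ^ i)]
  by_cases hkl : k = l
  · subst hkl
    have : z = 1 := by rw [hz]; exact mul_inv_cancel₀ (pow_ne_zero _ hω0)
    simp [this]
  · have hz1 : z ≠ 1 := by
      intro h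
      apply hkl
      have hl0 : ω ^ (l : ℕ) ≠ 0 := pow_ne_zero _ hω0
      have : ω ^ (k : ℕ) = ω ^ (l : ℕ) := (mul_inv_eq_one₀ hl0).mp (hz ▸ h)
      exact Fin.ext (hprim.pow_inj k.isLt l.isLt this)
    have hzN : z ^ N = 1 := by
      rw [hz, mul_pow, inv_pow, ← pow_mul, ← pow_mul, mul_comm (k : ℕ) N,
        mul_comm (l : ℕ) N, pow_mul, pow_mul, hωN, one_pow, one_pow, inv_one, mul_one]
    rw [geom_sum_eq hz1, hzN, sub_self, zero_div, if_neg hkl]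

private lemma parseval (N : ℕ) (hN : 0 < N) (ω : ℂ)
    (hω : ω = Complex.exp (2 * (Real.pi : ℂ) * Complex.I / N)) (x : Fin N → ℂ)
    (hx : ∀ n : Fin N, ‖∑ k : Fin N, x k * ω ^ ((k : ℕ) * (n : ℕ))‖ = 1) :
    ∑ k : Fin N, Complex.normSq (x k) = 1 := by
  have key : ∑ n : Fin N, (∑ k : Fin N, x k * ω ^ ((k : ℕ) * (n : ℕ))) *
      (starRingEnd ℂ) (∑ k : Fin N, x k * ω ^ ((k : ℕ) * (n : ℕ))) = (N : ℂ) := by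
    have : ∀ n : Fin N, (∑ k : Fin N, x k * ω ^ ((k : ℕ) * (n : ℕ))) *
        (starRingEnd ℂ) (∑ k : Fin N, x k * ω ^ ((k : ℕ) * (n : ℕ))) = 1 := by
      intro n
      rw [Complex.mul_conj]
      norm_cast
      rw [← Complex.sq_norm, hx n, one_pow]
    simp only [this]
    simp
  have expand : ∑ n : Fin N, (∑ k : Fin N, x k * ω ^ ((k : ℕ) * (n : ℕ))) *
      (starRingEnd ℂ) (∑ k : Fin N, x k * ω ^ ((k : ℕ) * (n : ℕ)))
      = (N : ℂ) * ∑ k : Fin N, (Complex.normSq (x k) : ℂ) := by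
    have step : ∀ n : Fin N, (∑ k : Fin N, x k * ω ^ ((k : ℕ) * (n : ℕ))) *
        (starRingEnd ℂ) (∑ k : Fin N, x k * ω ^ ((k : ℕ) * (n : ℕ)))
        = ∑ k : Fin N, ∑ l : Fin N, (x k * (starRingEnd ℂ) (x l)) *
            (ω ^ ((k : ℕ) * (n : ℕ)) * (starRingEnd ℂ) (ω ^ ((l : ℕ) * (n : ℕ)))) := by
      intro n
      rw [map_sum, Finset.sum_mul_sum]
      refine Finset.sum_congr rfl fun k _ => Finset.sum_congr rfl fun l _ => ?_
      rw [_root_.map_mul]; ring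
    rw [Finset.sum_congr rfl fun n _ => step n]
    rw [Finset.sum_comm]
    have inner : ∀ k : Fin N, ∑ n : Fin N, ∑ l : Fin N, (x k * (starRingEnd ℂ) (x l)) *
        (ω ^ ((k : ℕ) * (n : ℕ)) * (starRingEnd ℂ) (ω ^ ((l : ℕ) * (n : ℕ))))
        = (N : ℂ) * (Complex.normSq (x k) : ℂ) := by
      intro k
      rw [Finset.sum_comm]
      have : ∀ l : Fin N, ∑ n : Fin N, (x k * (starRingEnd ℂ) (x l)) *
          (ω ^ ((k : ℕ) * (n : ℕ)) * (starRingEnd ℂ) (ω ^ ((l : ℕ) * (n : ℕ))))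
          = (x k * (starRingEnd ℂ) (x l)) * (if k = l then (N : ℂ) else 0) := by
        intro l
        rw [← Finset.mul_sum, dft_orthog N hN ω hω k l]
      rw [Finset.sum_congr rfl fun l _ => this l]
      simp only [mul_ite, mul_zero, Finset.sum_ite_eq, Finset.mem_univ, if_true,
        Complex.mul_conj]
      ring
    rw [Finset.sum_congr rfl fun k _ => inner k, ← Finset.mul_sum]
  have hNC : (N : ℂ) ≠ 0 := Nat.cast_ne_zero.mpr hN.ne'
  have : (N : ℂ) * ∑ k : Fin N, (Complex.normSq (x k) : ℂ) = (N : ℂ) := by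
    rw [← expand, key]
  have hsum : ∑ k : Fin N, (Complex.normSq (x k) : ℂ) = 1 := by
    field_simp at this
    tauto
  have := hsum
  push_cast at this
  exact_mod_cast hsum

/-- Proposition 3: for Hermitian positive definite `A`, any `c ∈ ℂ^N`, and reals
`a > b ≥ 0` with `a + b = 1`, the infimum over the constant-modulus set `S` of
`x̃ᴴ A x̃ + 2 Re(x̃ᴴ c)` is at most the infimum over `S` of
`x̃ᴴ A x̃ + √(b/a)·2 Re(x̃ᴴ c)`. -/
theorem stmt12 (N : ℕ) (hN : 0 < N) (ω : ℂ)
    (hω : ω = Complex.exp (2 * (Real.pi : ℂ) * Complex.I / N))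
    (S : Set (Fin N → ℂ))
    (hS : S = {x : Fin N → ℂ |
      ∀ n : Fin N, ‖∑ k : Fin N, x k * ω ^ ((k : ℕ) * (n : ℕ))‖ = 1})
    (A : Matrix (Fin N) (Fin N) ℂ) (hA : A.PosDef)
    (c : Fin N → ℂ) (a b : ℝ) (hb : 0 ≤ b) (hba : b < a) (hab : a + b = 1) :
    sInf ((fun x : Fin N → ℂ =>
        (star x ⬝ᵥ (A *ᵥ x)).re + 2 * (star x ⬝ᵥ c).re) '' S) ≤
      sInf ((fun x : Fin N → ℂ =>
        (star x ⬝ᵥ (A *ᵥ x)).re + Real.sqrt (b / a) * (2 * (star x ⬝ᵥ c).re)) '' S) := by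
  have ha : 0 < a := lt_of_le_of_lt hb hba
  set t : ℝ := Real.sqrt (b / a) with ht
  have ht0 : 0 ≤ t := Real.sqrt_nonneg _
  have ht1 : t ≤ 1 := by
    rw [ht]
    rw [show (1:ℝ) = Real.sqrt 1 by simp]
    exact Real.sqrt_le_sqrt (by rw [div_le_one ha]; linarith)
  -- S is nonempty
  have hSne : S.Nonempty := by
    refine ⟨fun k => if k = (⟨0, hN⟩ : Fin N) then 1 else 0, ?_⟩
    rw [hS]
    intro n
    rw [Finset.sum_eq_single (⟨0, hN⟩ : Fin N)]
    · simp
    · intro k _ hk; simp [hk]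
    · simp
  -- S is closed under negation
  have hneg : ∀ x ∈ S, -x ∈ S := by
    intro x hx
    rw [hS] at hx ⊢
    intro n
    have : ∑ k : Fin N, (-x) k * ω ^ ((k : ℕ) * (n : ℕ))
        = -(∑ k : Fin N, x k * ω ^ ((k : ℕ) * (n : ℕ))) := by
      rw [← Finset.sum_neg_distrib]
      exact Finset.sum_congr rfl fun k _ => by simp
    rw [this, norm_neg]
    exact hx n
  -- each |x k| ≤ 1 on S, hence a linear-term bound
  have hlin : ∀ x ∈ S, |(star x ⬝ᵥ c).re| ≤ ∑ k : Fin N, ‖c k‖ := by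
    intro x hx
    rw [hS] at hx
    have hpar := parseval N hN ω hω x hx
    have hxk : ∀ k : Fin N, ‖x k‖ ≤ 1 := by
      intro k
      have h1 : Complex.normSq (x k) ≤ 1 := by
        rw [← hpar]
        exact Finset.single_le_sum (fun i _ => Complex.normSq_nonneg (x i))
          (Finset.mem_univ k)
      nlinarith [Complex.sq_norm (x k), norm_nonneg (x k)]
    calc |(star x ⬝ᵥ c).re| ≤ ‖star x ⬝ᵥ c‖ := Complex.abs_re_le_norm _
      _ ≤ ∑ k : Fin N, ‖star x k * c k‖ := norm_sum_le _ _
      _ ≤ ∑ k : Fin N, ‖c k‖ := by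
          refine Finset.sum_le_sum fun k _ => ?_
          have hst : ‖star x k * c k‖
              = ‖x k‖ * ‖c k‖ := by
            rw [norm_mul]
            simp
          rw [hst]
          calc ‖x k‖ * ‖c k‖
              ≤ 1 * ‖c k‖ :=
                mul_le_mul_of_nonneg_right (hxk k) (norm_nonneg _)
            _ = ‖c k‖ := one_mul _
  -- quadratic term is nonneg
  have hquad : ∀ x : Fin N → ℂ, 0 ≤ (star x ⬝ᵥ (A *ᵥ x)).re := by
    intro x
    exact hA.posSemidef.re_dotProduct_nonneg x
  -- f-image bounded below
  have hbdd : BddBelow ((fun x : Fin N → ℂ =>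
      (star x ⬝ᵥ (A *ᵥ x)).re + 2 * (star x ⬝ᵥ c).re) '' S) := by
    refine ⟨-(2 * ∑ k : Fin N, ‖c k‖), ?_⟩
    rintro y ⟨x, hx, rfl⟩
    have h1 := hquad x
    have h2 := hlin x hx
    have := abs_le.mp h2
    simp only
    linarith [this.1]
  -- main argument
  refine le_csInf (hSne.image _) ?_
  rintro y ⟨x, hx, rfl⟩
  simp only
  set q : ℝ := (star x ⬝ᵥ (A *ᵥ x)).re with hq
  set L : ℝ := (star x ⬝ᵥ c).re with hL
  by_cases hLpos : 0 ≤ L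
  · -- use -x
    have hmem : (fun x : Fin N → ℂ =>
        (star x ⬝ᵥ (A *ᵥ x)).re + 2 * (star x ⬝ᵥ c).re) (-x)
        ∈ (fun x : Fin N → ℂ =>
        (star x ⬝ᵥ (A *ᵥ x)).re + 2 * (star x ⬝ᵥ c).re) '' S :=
      ⟨-x, hneg x hx, rfl⟩
    have hval : (fun x : Fin N → ℂ =>
        (star x ⬝ᵥ (A *ᵥ x)).re + 2 * (star x ⬝ᵥ c).re) (-x) = q - 2 * L := by
      simp only
      have e1 : star (-x) ⬝ᵥ (A *ᵥ (-x)) = star x ⬝ᵥ (A *ᵥ x) := by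
        rw [star_neg, Matrix.mulVec_neg, neg_dotProduct, dotProduct_neg,
          neg_neg]
      have e2 : star (-x) ⬝ᵥ c = -(star x ⬝ᵥ c) := by
        rw [star_neg, neg_dotProduct]
      rw [e1, e2, Complex.neg_re, hq, hL]
      ring
    calc sInf _ ≤ q - 2 * L := hval ▸ csInf_le hbdd hmem
      _ ≤ q + t * (2 * L) := by nlinarith
  · push_neg at hLpos
    have hmem : (fun x : Fin N → ℂ =>
        (star x ⬝ᵥ (A *ᵥ x)).re + 2 * (star x ⬝ᵥ c).re) x
        ∈ (fun x : Fin N → ℂ =>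
        (star x ⬝ᵥ (A *ᵥ x)).re + 2 * (star x ⬝ᵥ c).re) '' S :=
      ⟨x, hx, rfl⟩
    calc sInf _ ≤ q + 2 * L := csInf_le hbdd hmem
      _ ≤ q + t * (2 * L) := by nlinarith
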